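/- Let t be a positive integer and let S be an n×n irreducible symmetric matrix with integer entries such that S_{xx} ≤ -t for every index x, S_{xy} ≤ 1 for all distinct indices x, y, S_{xx} ≤ S_{xy} for all x, y, and no principal submatrix of S is equivalent to an element of M(t). Then the smallest eigenvalue of S is at least -t-1 and S is equivalent to one of: (i) the 1×1 matrix (-t); (ii) the 1×1 matrix (-t-1); (iii) J_n - (t+1)I_n; (iv) the block matrix with diagonal blocks J_{r_1} - (t+1)I_{r_1} and J_{r_2} - (t+1)I_{r_2} and off-diagonal blocks -J_{r_1×r_2} and -J_{r_2×r_1}, for some positive integers r_1, r_2 with r_1 + r_2 = n. -/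

import Mathlib

open Matrix

/-- The 1×1 matrices of `M(t)`: `(-t+a)` for integers `a ≤ -2`. -/
def inM1 (t : ℕ) (B : Matrix (Fin 1) (Fin 1) ℤ) : Prop :=
  ∃ a : ℤ, a ≤ -2 ∧ B = !![-(t : ℤ) + a]

/-- The 2×2 matrices of `M(t)`. -/
def inM2 (t : ℕ) (B : Matrix (Fin 2) (Fin 2) ℤ) : Prop :=
  (∃ a : ℤ, -(t : ℤ) ≤ a ∧ a ≤ -2 ∧ B = !![-(t : ℤ), a; a, -(t : ℤ)]) ∨
  (∃ a : ℤ, (a = 1 ∨ (-(t : ℤ) ≤ a ∧ a ≤ -1)) ∧ B = !![-(t : ℤ) - 1, a; a, -(t : ℤ)]) ∨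
  (∃ a : ℤ, (a = 1 ∨ (-(t : ℤ) - 1 ≤ a ∧ a ≤ -1)) ∧ B = !![-(t : ℤ) - 1, a; a, -(t : ℤ) - 1])

/-- The 3×3 matrices of `M(t)`: `m₅(t), m₆(t), m₇(t), m₈(t), m₉(t)`. -/
def inM3 (t : ℕ) (B : Matrix (Fin 3) (Fin 3) ℤ) : Prop :=
  B = !![-(t : ℤ), -1, -1; -1, -(t : ℤ), -1; -1, -1, -(t : ℤ)] ∨
  B = !![-(t : ℤ), 1, 1; 1, -(t : ℤ), -1; 1, -1, -(t : ℤ)] ∨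
  B = !![-(t : ℤ), 0, 1; 0, -(t : ℤ), -1; 1, -1, -(t : ℤ)] ∨
  B = !![-(t : ℤ), 0, 1; 0, -(t : ℤ), 1; 1, 1, -(t : ℤ)] ∨
  B = !![-(t : ℤ), 0, -1; 0, -(t : ℤ), -1; -1, -1, -(t : ℤ)]

lemma vinj2 {m : ℕ} {x y : Fin m} (h : x ≠ y) : Function.Injective ![x, y] := by
  intro i j hij
  fin_cases i <;> fin_cases j <;> simp_all

lemma vinj3 {m : ℕ} {x y z : Fin m} (hxy : x ≠ y) (hxz : x ≠ z) (hyz : y ≠ z) :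
    Function.Injective ![x, y, z] := by
  intro i j hij
  fin_cases i <;> fin_cases j <;> simp_all

lemma sub2eq {m : ℕ} (S : Matrix (Fin m) (Fin m) ℤ) (x y : Fin m) :
    ((S.submatrix ![x,y] ![x,y]).submatrix (⇑(Equiv.refl (Fin 2))) (⇑(Equiv.refl (Fin 2))))
      = !![S x x, S x y; S y x, S y y] := by
  ext i j
  fin_cases i <;> fin_cases j <;> simp [Matrix.submatrix_apply] <;> rfl

lemma sub3eq {m : ℕ} (S : Matrix (Fin m) (Fin m) ℤ) (x y z : Fin m) :
    ((S.submatrix ![x,y,z] ![x,y,z]).submatrix (⇑(Equiv.refl (Fin 3))) (⇑(Equiv.refl (Fin 3))))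
      = !![S x x, S x y, S x z; S y x, S y y, S y z; S z x, S z y, S z z] := by
  ext i j
  fin_cases i <;> fin_cases j <;> simp [Matrix.submatrix_apply] <;> rfl

section Struct
variable {t n : ℕ} {S : Matrix (Fin n) (Fin n) ℤ}

lemma diag_cases (ht : 0 < t) (hdiag : ∀ x, S x x ≤ -(t : ℤ))
    (h1 : ¬ ∃ f : Fin 1 → Fin n, Function.Injective f ∧
      ∃ e : Equiv.Perm (Fin 1), inM1 t ((S.submatrix f f).submatrix e e)) :
    ∀ x, S x x = -(t:ℤ) ∨ S x x = -(t:ℤ) - 1 := by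
  intro x
  by_contra hc
  push_neg at hc
  have hx : S x x ≤ -(t:ℤ) - 2 := by have := hdiag x; omega
  apply h1
  refine ⟨fun _ => x, Function.injective_of_subsingleton _, Equiv.refl _,
    ⟨S x x + t, by omega, ?_⟩⟩
  ext i j
  fin_cases i; fin_cases j
  simp [Matrix.submatrix_apply]

lemma offdiag_zero (ht : 0 < t) (hsym : S.IsSymm)
    (hdiag : ∀ x, S x x ≤ -(t : ℤ))
    (hoffdiag : ∀ x y, x ≠ y → S x y ≤ 1)
    (hle : ∀ x y, S x x ≤ S x y)
    (h1 : ¬ ∃ f : Fin 1 → Fin n, Function.Injective f ∧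
      ∃ e : Equiv.Perm (Fin 1), inM1 t ((S.submatrix f f).submatrix e e))
    (h2 : ¬ ∃ f : Fin 2 → Fin n, Function.Injective f ∧
      ∃ e : Equiv.Perm (Fin 2), inM2 t ((S.submatrix f f).submatrix e e)) :
    ∀ x y, x ≠ y → S x x = -(t:ℤ) - 1 → S x y = 0 := by
  intro x y hxy hxx
  by_contra ha
  have hyx : S y x = S x y := hsym.apply x y
  have hub : S x y ≤ 1 := hoffdiag x y hxy
  have hlb : S y y ≤ S x y := hyx ▸ hle y x
  apply h2
  refine ⟨![x, y], vinj2 hxy, Equiv.refl _, ?_⟩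
  rw [sub2eq]
  rcases diag_cases ht hdiag h1 y with hyy | hyy
  · exact Or.inr (Or.inl ⟨S x y, by omega, by rw [hxx, hyy, hyx]⟩)
  · exact Or.inr (Or.inr ⟨S x y, by omega, by rw [hxx, hyy, hyx]⟩)

lemma offdiag_range (ht : 0 < t) (hsym : S.IsSymm)
    (hoffdiag : ∀ x y, x ≠ y → S x y ≤ 1)
    (hle : ∀ x y, S x x ≤ S x y)
    (h2 : ¬ ∃ f : Fin 2 → Fin n, Function.Injective f ∧
      ∃ e : Equiv.Perm (Fin 2), inM2 t ((S.submatrix f f).submatrix e e))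
    (x y : Fin n) (hxy : x ≠ y) (hxx : S x x = -(t:ℤ)) (hyy : S y y = -(t:ℤ)) :
    S x y = -1 ∨ S x y = 0 ∨ S x y = 1 := by
  by_contra hc
  push_neg at hc
  have hyx : S y x = S x y := hsym.apply x y
  have hub : S x y ≤ 1 := hoffdiag x y hxy
  have hlb : S x x ≤ S x y := hle x y
  apply h2
  refine ⟨![x, y], vinj2 hxy, Equiv.refl _, Or.inl ⟨S x y, by omega, by omega, ?_⟩⟩
  rw [sub2eq, hxx, hyy, hyx]

end Struct

section Tri
variable {t n : ℕ} {S : Matrix (Fin n) (Fin n) ℤ}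

lemma trih (hsym : S.IsSymm)
    (h3 : ¬ ∃ f : Fin 3 → Fin n, Function.Injective f ∧
      ∃ e : Equiv.Perm (Fin 3), inM3 t ((S.submatrix f f).submatrix e e))
    (x y z : Fin n) (hxy : x ≠ y) (hxz : x ≠ z) (hyz : y ≠ z)
    (dx : S x x = -(t:ℤ)) (dy : S y y = -(t:ℤ)) (dz : S z z = -(t:ℤ))
    (p q r : ℤ) (hab : S x y = p) (hac : S x z = q) (hbc : S y z = r)
    (hm : inM3 t !![-(t:ℤ), p, q; p, -(t:ℤ), r; q, r, -(t:ℤ)]) : False := by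
  apply h3
  refine ⟨![x,y,z], vinj3 hxy hxz hyz, Equiv.refl _, ?_⟩
  rw [sub3eq, hsym.apply x y, hsym.apply x z, hsym.apply y z, dx, dy, dz, hab, hac, hbc]
  exact hm

lemma tri_zero (hsym : S.IsSymm)
    (h3 : ¬ ∃ f : Fin 3 → Fin n, Function.Injective f ∧
      ∃ e : Equiv.Perm (Fin 3), inM3 t ((S.submatrix f f).submatrix e e))
    (hdt : ∀ x, S x x = -(t:ℤ))
    (hrange : ∀ x y, x ≠ y → S x y = -1 ∨ S x y = 0 ∨ S x y = 1)
    (x y z : Fin n) (hxy : x ≠ y) (hxz : x ≠ z) (hyz : y ≠ z)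
    (h0 : S x y = 0) (ha : S x z ≠ 0) (hb : S y z ≠ 0) : False := by
  rcases hrange x z hxz with h | h | h
  · rcases hrange y z hyz with h' | h' | h'
    · -- (-1,-1) : m9
      exact trih hsym h3 x y z hxy hxz hyz (hdt x) (hdt y) (hdt z) 0 (-1) (-1) h0 h h'
        (Or.inr (Or.inr (Or.inr (Or.inr rfl))))
    · exact hb h'
    · -- (-1,1) : swap x y, m7
      exact trih hsym h3 y x z hxy.symm hyz hxz (hdt y) (hdt x) (hdt z) 0 1 (-1)
        (by rw [hsym.apply x y]; exact h0) h' h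
        (Or.inr (Or.inr (Or.inl rfl)))
  · exact ha h
  · rcases hrange y z hyz with h' | h' | h'
    · -- (1,-1) : m7
      exact trih hsym h3 x y z hxy hxz hyz (hdt x) (hdt y) (hdt z) 0 1 (-1) h0 h h'
        (Or.inr (Or.inr (Or.inl rfl)))
    · exact hb h'
    · -- (1,1) : m8
      exact trih hsym h3 x y z hxy hxz hyz (hdt x) (hdt y) (hdt z) 0 1 1 h0 h h'
        (Or.inr (Or.inr (Or.inr (Or.inl rfl))))

lemma tri_prod (hsym : S.IsSymm)
    (h3 : ¬ ∃ f : Fin 3 → Fin n, Function.Injective f ∧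
      ∃ e : Equiv.Perm (Fin 3), inM3 t ((S.submatrix f f).submatrix e e))
    (hdt : ∀ x, S x x = -(t:ℤ))
    (hrange : ∀ x y, x ≠ y → S x y = -1 ∨ S x y = 0 ∨ S x y = 1)
    (x y z : Fin n) (hxy : x ≠ y) (hxz : x ≠ z) (hyz : y ≠ z)
    (ha : S x y ≠ 0) (hb : S x z ≠ 0) (hc : S y z ≠ 0) :
    S x y * S x z * S y z = 1 := by
  rcases hrange x y hxy with h | h | h
  · rcases hrange x z hxz with h' | h' | h'
    · rcases hrange y z hyz with h'' | h'' | h''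
      · exact absurd (trih hsym h3 x y z hxy hxz hyz (hdt x) (hdt y) (hdt z) (-1) (-1) (-1)
          h h' h'' (Or.inl rfl)) id
      · exact absurd h'' hc
      · rw [h, h', h'']; norm_num
    · exact absurd h' hb
    · rcases hrange y z hyz with h'' | h'' | h''
      · rw [h, h', h'']; norm_num
      · exact absurd h'' hc
      · exact absurd (trih hsym h3 z x y hxz.symm hyz.symm hxy (hdt z) (hdt x) (hdt y) 1 1 (-1)
          (by rw [hsym.apply x z]; exact h') (by rw [hsym.apply y z]; exact h'') h
          (Or.inr (Or.inl rfl))) id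
  · exact absurd h ha
  · rcases hrange x z hxz with h' | h' | h'
    · rcases hrange y z hyz with h'' | h'' | h''
      · rw [h, h', h'']; norm_num
      · exact absurd h'' hc
      · exact absurd (trih hsym h3 y x z hxy.symm hyz hxz (hdt y) (hdt x) (hdt z) 1 1 (-1)
          (by rw [hsym.apply x y]; exact h) h'' h' (Or.inr (Or.inl rfl))) id
    · exact absurd h' hb
    · rcases hrange y z hyz with h'' | h'' | h''
      · exact absurd (trih hsym h3 x y z hxy hxz hyz (hdt x) (hdt y) (hdt z) 1 1 (-1)
          h h' h'' (Or.inr (Or.inl rfl))) id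
      · exact absurd h'' hc
      · rw [h, h', h'']; norm_num

end Tri

lemma spec_bound {n : ℕ} (A : Matrix (Fin n) (Fin n) ℝ) (c : ℝ) (w : Fin n → ℝ)
    (hA : ∀ i j, A i j = w i * w j - c * (if i = j then 1 else 0)) :
    ∀ μ ∈ spectrum ℝ A, -c ≤ μ := by
  intro μ hμ
  rw [spectrum.mem_iff] at hμ
  have hdet : ((algebraMap ℝ (Matrix (Fin n) (Fin n) ℝ)) μ - A).det = 0 := by
    by_contra h
    exact hμ ((Matrix.isUnit_iff_isUnit_det _).mpr (isUnit_iff_ne_zero.mpr h))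
  obtain ⟨v, hv0, hv⟩ := (Matrix.exists_mulVec_eq_zero_iff).mpr hdet
  have hAv : ∀ i, (∑ j, A i j * v j) = μ * v i := by
    intro i
    have h2 : (algebraMap ℝ (Matrix (Fin n) (Fin n) ℝ)) μ *ᵥ v - A *ᵥ v = 0 := by
      rw [← Matrix.sub_mulVec]; exact hv
    have h3 : (algebraMap ℝ (Matrix (Fin n) (Fin n) ℝ)) μ *ᵥ v = μ • v := by
      rw [Algebra.algebraMap_eq_smul_one, Matrix.smul_mulVec, Matrix.one_mulVec]
    rw [h3, sub_eq_zero] at h2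
    have := congrFun h2 i
    simpa [Matrix.mulVec, dotProduct] using this.symm
  have key : μ * (∑ i, v i ^ 2) = (∑ i, w i * v i) ^ 2 - c * ∑ i, v i ^ 2 := by
    have lhs : μ * (∑ i, v i ^ 2) = ∑ i, (∑ j, A i j * v j) * v i := by
      rw [Finset.mul_sum]
      congr 1; ext i
      rw [hAv i]; ring
    have expand : ∀ i : Fin n, (∑ j, A i j * v j) * v i
        = (∑ j, w i * w j * v j * v i) - c * (v i ^ 2) := by
      intro i
      rw [Finset.sum_mul]
      have e1 : ∀ j : Fin n, A i j * v j * v i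
          = w i * w j * v j * v i - (if i = j then c * (v j * v i) else 0) := by
        intro j
        rw [hA]
        by_cases h : i = j <;> simp [h] <;> ring
      rw [Finset.sum_congr rfl (fun j _ => e1 j), Finset.sum_sub_distrib,
        Finset.sum_ite_eq]
      rw [if_pos (Finset.mem_univ i)]; ring
    rw [lhs, Finset.sum_congr rfl (fun i _ => expand i), Finset.sum_sub_distrib,
      ← Finset.mul_sum]
    congr 1
    rw [sq, Finset.sum_mul_sum]
    refine Finset.sum_congr rfl fun i _ => Finset.sum_congr rfl fun j _ => by ring
  have hpos : 0 < ∑ i, v i ^ 2 := by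
    obtain ⟨i, hi⟩ := Function.ne_iff.mp hv0
    exact Finset.sum_pos' (fun j _ => sq_nonneg _)
      ⟨i, Finset.mem_univ i, pow_pos (abs_pos.mpr hi) 2 |>.trans_le
        (by rw [← abs_pow, abs_of_nonneg (sq_nonneg _)])⟩
  nlinarith [sq_nonneg (∑ i, w i * v i)]

theorem structure_of_irreducible_special_matrices (t n : ℕ) (ht : 0 < t)
    (S : Matrix (Fin n) (Fin n) ℤ) (hsym : S.IsSymm)
    (hdiag : ∀ x, S x x ≤ -(t : ℤ))
    (hoffdiag : ∀ x y, x ≠ y → S x y ≤ 1)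
    (hle : ∀ x y, S x x ≤ S x y)
    -- `S` is irreducible: it is not equivalent (under a simultaneous permutation of
    -- rows and columns) to a block diagonal matrix with at least two blocks.
    (hirr : ¬ ∃ s : Finset (Fin n), s.Nonempty ∧ s ≠ Finset.univ ∧
      ∀ i ∈ s, ∀ j ∉ s, S i j = 0)
    -- no principal submatrix of `S` is equivalent to an element of `M(t)`:
    (h1 : ¬ ∃ f : Fin 1 → Fin n, Function.Injective f ∧
      ∃ e : Equiv.Perm (Fin 1), inM1 t ((S.submatrix f f).submatrix e e))
    (h2 : ¬ ∃ f : Fin 2 → Fin n, Function.Injective f ∧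
      ∃ e : Equiv.Perm (Fin 2), inM2 t ((S.submatrix f f).submatrix e e))
    (h3 : ¬ ∃ f : Fin 3 → Fin n, Function.Injective f ∧
      ∃ e : Equiv.Perm (Fin 3), inM3 t ((S.submatrix f f).submatrix e e)) :
    (∀ μ ∈ spectrum ℝ (S.map (fun z : ℤ => (z : ℝ))), -(t : ℝ) - 1 ≤ μ) ∧
    ((n = 1 ∧ ∀ i j, S i j = -(t : ℤ)) ∨
     (n = 1 ∧ ∀ i j, S i j = -(t : ℤ) - 1) ∨
     (∀ i j, S i j = if i = j then -(t : ℤ) else 1) ∨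
     (∃ (e : Equiv.Perm (Fin n)) (r₁ r₂ : ℕ), 0 < r₁ ∧ 0 < r₂ ∧ r₁ + r₂ = n ∧
        ∀ i j, S (e i) (e j) =
          if i = j then -(t : ℤ)
          else if (((i : ℕ) < r₁) ↔ ((j : ℕ) < r₁)) then 1 else -1)) := by
  classical
  have hdd := diag_cases ht hdiag h1
  have hzz := offdiag_zero ht hsym hdiag hoffdiag hle h1 h2
  have hstruct : ((n = 1 ∧ ∀ i j, S i j = -(t : ℤ)) ∨
     (n = 1 ∧ ∀ i j, S i j = -(t : ℤ) - 1) ∨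
     (∀ i j, S i j = if i = j then -(t : ℤ) else 1) ∨
     (∃ (e : Equiv.Perm (Fin n)) (r₁ r₂ : ℕ), 0 < r₁ ∧ 0 < r₂ ∧ r₁ + r₂ = n ∧
        ∀ i j, S (e i) (e j) =
          if i = j then -(t : ℤ)
          else if (((i : ℕ) < r₁) ↔ ((j : ℕ) < r₁)) then 1 else -1)) := by
    by_cases hn0 : n = 0
    · exact Or.inr (Or.inr (Or.inl (fun i _ => absurd i.isLt (by omega))))
    by_cases hn1 : n = 1
    · have hone : ∀ i j : Fin n, i = j := fun i j => Fin.ext (by omega)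
      have x₀ : Fin n := ⟨0, by omega⟩
      rcases hdd x₀ with h | h
      · exact Or.inl ⟨hn1, fun i j => by rw [hone i x₀, hone j x₀]; exact h⟩
      · exact Or.inr (Or.inl ⟨hn1, fun i j => by rw [hone i x₀, hone j x₀]; exact h⟩)
    -- n ≥ 2
    have hn2 : 2 ≤ n := by omega
    have hcard : 1 < Fintype.card (Fin n) := by simp only [Fintype.card_fin]; omega
    have hdt : ∀ x, S x x = -(t:ℤ) := by
      intro x
      rcases hdd x with h | h
      · exact h
      · exfalso
        apply hirr
        refine ⟨{x}, Finset.singleton_nonempty x, ?_, ?_⟩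
        · intro hu
          obtain ⟨y, hy⟩ := Fintype.exists_ne_of_one_lt_card hcard x
          exact hy (Finset.mem_singleton.mp (hu ▸ Finset.mem_univ y))
        · intro i hi j hj
          rw [Finset.mem_singleton] at hi
          subst hi
          exact hzz i j (Finset.notMem_singleton.mp hj).symm h
    have hrange : ∀ x y, x ≠ y → S x y = -1 ∨ S x y = 0 ∨ S x y = 1 :=
      fun x y h => offdiag_range ht hsym hoffdiag hle h2 x y h (hdt x) (hdt y)
    have hfull : ∀ x y, x ≠ y → S x y ≠ 0 := by
      intro x y hxy h0
      apply hirr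
      set s : Finset (Fin n) := Finset.univ.filter (fun k => k = x ∨ S x k ≠ 0) with hs
      have hxs : x ∈ s := by simp [hs]
      have hys : y ∉ s := by
        simp only [hs, Finset.mem_filter, Finset.mem_univ, true_and, not_or]
        exact ⟨fun h => hxy h.symm, fun h => h h0⟩
      refine ⟨s, ⟨x, hxs⟩, fun hu => hys (hu ▸ Finset.mem_univ y), ?_⟩
      intro i hi j hj
      simp only [hs, Finset.mem_filter, Finset.mem_univ, true_and, not_or] at hi hj
      obtain ⟨hjx, hj0⟩ := hj
      rw [not_not] at hj0
      rcases hi with rfl | hi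
      · exact hj0
      · by_cases hix : i = x
        · subst hix; exact hj0
        · have hij : i ≠ j := fun h => (h ▸ hi) hj0
          by_contra hSij
          exact tri_zero hsym h3 hdt hrange x j i (fun h => hjx h.symm)
            (fun h => hix h.symm) hij.symm hj0 hi
            (fun h => hSij (by rw [← hsym.apply i j]; exact h))
    set x₀ : Fin n := ⟨0, by omega⟩ with hx₀
    set p : Fin n → Prop := fun k => k = x₀ ∨ S x₀ k = 1 with hp
    have hpx₀ : p x₀ := Or.inl rfl
    have hsign : ∀ i j, i ≠ j → (S i j = 1 ↔ (p i ↔ p j)) := by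
      intro i j hij
      by_cases hix : i = x₀
      · subst hix
        constructor
        · intro h1'
          exact iff_of_true hpx₀ (Or.inr h1')
        · intro hiff
          rcases hiff.mp hpx₀ with h | h
          · exact absurd h.symm hij
          · exact h
      · by_cases hjx : j = x₀
        · have hsy : S x₀ i = S i j := by rw [← hjx]; exact hsym.apply i j
          have hpj : p j := by rw [hjx]; exact hpx₀
          constructor
          · intro h1'
            exact iff_of_true (Or.inr (hsy.trans h1')) hpj
          · intro hiff
            rcases hiff.mpr hpj with h | h
            · exact absurd h hix
            · rw [← hsy]; exact h
        · have h0i : S x₀ i ≠ 0 := hfull x₀ i (Ne.symm hix)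
          have h0j : S x₀ j ≠ 0 := hfull x₀ j (Ne.symm hjx)
          have hnz : S i j ≠ 0 := hfull i j hij
          have hprod : S x₀ i * S x₀ j * S i j = 1 :=
            tri_prod hsym h3 hdt hrange x₀ i j (Ne.symm hix) (Ne.symm hjx) hij h0i h0j hnz
          have hpi : p i ↔ S x₀ i = 1 := or_iff_right hix
          have hpj : p j ↔ S x₀ j = 1 := or_iff_right hjx
          rw [hpi, hpj]
          rcases hrange x₀ i (Ne.symm hix) with h | h | h
          · rcases hrange x₀ j (Ne.symm hjx) with h' | h' | h'
            · rw [h, h'] at hprod ⊢; norm_num at hprod ⊢; omega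
            · exact absurd h' h0j
            · rw [h, h'] at hprod ⊢; norm_num at hprod ⊢; omega
          · exact absurd h h0i
          · rcases hrange x₀ j (Ne.symm hjx) with h' | h' | h'
            · rw [h, h'] at hprod ⊢; norm_num at hprod ⊢; omega
            · exact absurd h' h0j
            · rw [h, h'] at hprod ⊢; norm_num at hprod ⊢; omega
    have hsignm : ∀ i j, i ≠ j → ¬(p i ↔ p j) → S i j = -1 := by
      intro i j hij hniff
      rcases hrange i j hij with h | h | h
      · exact h
      · exact absurd h (hfull i j hij)
      · exact absurd ((hsign i j hij).mp h) hniff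
    by_cases hall : ∀ k, p k
    · refine Or.inr (Or.inr (Or.inl ?_))
      intro i j
      by_cases h : i = j
      · subst h; rw [if_pos rfl]; exact hdt i
      · rw [if_neg h]; exact (hsign i j h).mpr (iff_of_true (hall i) (hall j))
    · push_neg at hall
      obtain ⟨y₀, hy₀⟩ := hall
      set r₁ := (Finset.univ.filter p).card with hr₁def
      set r₂ := (Finset.univ.filter (fun k => ¬ p k)).card with hr₂def
      have hr : r₁ + r₂ = n := by
        rw [hr₁def, hr₂def, Finset.card_filter_add_card_filter_not]
        simp
      have hr₁ : 0 < r₁ := Finset.card_pos.mpr ⟨x₀, by simp [hpx₀]⟩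
      have hr₂ : 0 < r₂ := Finset.card_pos.mpr ⟨y₀, by simp [hy₀]⟩
      have hc₁ : Fintype.card {k // p k} = r₁ := Fintype.card_subtype p
      have hc₂ : Fintype.card {k // ¬ p k} = r₂ := Fintype.card_subtype _
      set e₁ : Fin r₁ ≃ {k // p k} := (Fintype.equivFinOfCardEq hc₁).symm with he₁
      set e₂ : Fin r₂ ≃ {k // ¬ p k} := (Fintype.equivFinOfCardEq hc₂).symm with he₂
      set E : Fin n ≃ Fin n :=
        ((finCongr hr.symm).trans (finSumFinEquiv.symm.trans
          ((e₁.sumCongr e₂).trans (Equiv.sumCompl p)))) with hE_def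
      have hE : ∀ i : Fin n, p (E i) ↔ (i : ℕ) < r₁ := by
        intro i
        by_cases h : (i : ℕ) < r₁
        · have h1 : (finCongr hr.symm) i = Fin.castAdd r₂ ⟨i, h⟩ := by
            ext; simp
          have h2 : E i = (e₁ ⟨i, h⟩ : {k // p k}).1 := by
            simp only [hE_def, Equiv.trans_apply, h1, finSumFinEquiv_symm_apply_castAdd,
              Equiv.sumCongr_apply, Sum.map_inl, Equiv.sumCompl_apply_inl]
          rw [h2]
          exact iff_of_true (e₁ ⟨i, h⟩).2 h
        · have hlt : (i : ℕ) < r₁ + r₂ := by rw [hr]; exact i.isLt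
          have h1 : (finCongr hr.symm) i = Fin.natAdd r₁ ⟨(i : ℕ) - r₁, by omega⟩ := by
            ext; simp; omega
          have h2 : E i = (e₂ ⟨(i : ℕ) - r₁, by omega⟩ : {k // ¬ p k}).1 := by
            simp only [hE_def, Equiv.trans_apply, h1, finSumFinEquiv_symm_apply_natAdd,
              Equiv.sumCongr_apply, Sum.map_inr, Equiv.sumCompl_apply_inr]
          rw [h2]
          exact iff_of_false (e₂ ⟨(i : ℕ) - r₁, by omega⟩).2 h
      refine Or.inr (Or.inr (Or.inr ⟨E, r₁, r₂, hr₁, hr₂, hr, ?_⟩))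
      intro i j
      by_cases hij : i = j
      · subst hij; rw [if_pos rfl]; exact hdt _
      · rw [if_neg hij]
        have hEij : E i ≠ E j := fun h => hij (E.injective h)
        by_cases hcond : (((i:ℕ) < r₁) ↔ ((j:ℕ) < r₁))
        · rw [if_pos hcond]
          exact (hsign _ _ hEij).mpr (by rw [hE i, hE j]; exact hcond)
        · rw [if_neg hcond]
          exact hsignm _ _ hEij (by rw [hE i, hE j]; exact hcond)
  refine ⟨?_, hstruct⟩
  obtain ⟨w, hw⟩ : ∃ w : Fin n → ℝ, ∀ i j,
      (S.map (fun z : ℤ => (z : ℝ))) i j = w i * w j - ((t:ℝ)+1) * (if i = j then 1 else 0) := by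
    rcases hstruct with ⟨hn, hS⟩ | ⟨hn, hS⟩ | hS | ⟨e, r₁, r₂, hr₁, hr₂, hr, hS⟩
    · refine ⟨fun _ => 1, fun i j => ?_⟩
      have hij : i = j := Fin.ext (by omega)
      rw [Matrix.map_apply, hS i j, if_pos hij]
      push_cast; ring
    · refine ⟨fun _ => 0, fun i j => ?_⟩
      have hij : i = j := Fin.ext (by omega)
      rw [Matrix.map_apply, hS i j, if_pos hij]
      push_cast; ring
    · refine ⟨fun _ => 1, fun i j => ?_⟩
      rw [Matrix.map_apply, hS i j]
      by_cases h : i = j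
      · rw [if_pos h, if_pos h]; push_cast; ring
      · rw [if_neg h, if_neg h]; push_cast; ring
    · refine ⟨fun k => if ((e.symm k : ℕ) < r₁) then 1 else -1, fun i j => ?_⟩
      have hS' := hS (e.symm i) (e.symm j)
      rw [Equiv.apply_symm_apply, Equiv.apply_symm_apply] at hS'
      rw [Matrix.map_apply, hS']
      dsimp only
      by_cases h : i = j
      · subst h
        rw [if_pos rfl, if_pos rfl]
        by_cases hc : ((e.symm i : ℕ) < r₁)
        · rw [if_pos hc]; push_cast; ring
        · rw [if_neg hc]; push_cast; ring
      · have h' : e.symm i ≠ e.symm j := fun hh => h (by simpa using congrArg e hh)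
        rw [if_neg h', if_neg h]
        by_cases hc1 : ((e.symm i : ℕ) < r₁) <;> by_cases hc2 : ((e.symm j : ℕ) < r₁)
        · rw [if_pos (iff_of_true hc1 hc2), if_pos hc1, if_pos hc2]; push_cast; ring
        · rw [if_neg (fun hh => hc2 ((Iff.mp hh) hc1)), if_pos hc1, if_neg hc2]; push_cast; ring
        · rw [if_neg (fun hh => hc1 ((Iff.mpr hh) hc2)), if_neg hc1, if_pos hc2]; push_cast; ring
        · rw [if_pos (iff_of_false hc1 hc2), if_neg hc1, if_neg hc2]; push_cast; ring
  intro μ hμ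
  have := spec_bound _ ((t:ℝ)+1) w hw μ hμ
  linarith
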